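/- Let R be a ring. A condensed R-module X is discrete if and only if for every profinite set S, writing S as the limit of the cofiltered diagram of its discrete quotients S_i with projections π_i : S → S_i, the cocone on the diagram i ↦ X(S_i) with cocone point X(S) and coprojections X(π_i) is a colimit cocone in the category of R-modules. -/
import Mathlib

universe u

open CategoryTheory Limits

/-- Let `R` be a ring. A condensed `R`-module `X` is discrete if and only if for every profinite
set `S`, written as the limit of the cofiltered diagram of its discrete quotients `Sᵢ` with
projections `πᵢ : S → Sᵢ` (this is `S.asLimitCone`), the cocone on the diagram `i ↦ X(Sᵢ)` with
cocone point `X(S)` and coprojections `X(πᵢ)` is a colimit cocone in the category of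
`R`-modules. -/
theorem condensedMod_isDiscrete_iff_colimitCondition (R : Type (u + 1)) [Ring R]
    (M : CondensedMod.{u} R) :
    M.IsDiscrete ↔ ∀ S : Profinite.{u},
      Nonempty (IsColimit <| (profiniteToCompHaus.op ⋙ M.val).mapCocone S.asLimitCone.op) := by
  exact (CondensedMod.isDiscrete_tfae R M).out 0 6
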